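/- The controlled exterior reset of the pendulum on a cart satisfies the Weierstrass–Erdmann momentum condition: if p_x⁺ = -p_x⁻ + (2/ℓ)·cos(θ)·p_θ⁻ - 2v(M + m·sin²θ), then the momentum jump ε := p_x⁺ - p_x⁻ satisfies the energy balance H(θ, p_θ⁻, p_x⁻) - H(θ, p_θ⁻, p_x⁺) = ε·v, where H(θ, p_θ, p_x) = ((M+m)p_θ² - 2mℓ·cos(θ)·p_θ·p_x + mℓ²·p_x²)/(2mℓ²(M + m·sin²θ)) - mgℓ·cos(θ). -/
import Mathlib


noncomputable def cartHamiltonian (m M ℓ g θ pθ px : ℝ) : ℝ :=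
  ((M + m) * pθ ^ 2 - 2 * m * ℓ * Real.cos θ * pθ * px + m * ℓ ^ 2 * px ^ 2) /
      (2 * m * ℓ ^ 2 * (M + m * Real.sin θ ^ 2)) -
    m * g * ℓ * Real.cos θ

/-- The controlled exterior reset satisfies the Weierstrass–Erdmann energy
balance. -/
theorem weierstrass_erdmann_energy_balance
    (m M ℓ g θ v pθm pxm pxp : ℝ) (hm : 0 < m) (hM : 0 < M) (hℓ : 0 < ℓ)
    (hreset : pxp = -pxm + (2 / ℓ) * Real.cos θ * pθm -
      2 * v * (M + m * Real.sin θ ^ 2)) :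
    cartHamiltonian m M ℓ g θ pθm pxm - cartHamiltonian m M ℓ g θ pθm pxp =
      (pxp - pxm) * v := by
  have hD : M + m * Real.sin θ ^ 2 > 0 := by positivity
  subst hreset
  unfold cartHamiltonian
  field_simp
  ring
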